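/- Let M be a loopless matroid, B = {e_1,…,e_r} a basis, and x : E → ℝ≥0 a nonnegative weighting. Define weightings x_0 = x and x_i obtained from x by setting the weights of e_1,…,e_i to zero. Then mwb(M,x) = Σ_{i=1}^{r} b_{e_i}(x_{i-1}), where b_e(z) = min{z(e), μ_e(z)} is the bottleneck weight. -/

import Mathlib

open Matroid Set

variable {α : Type*}

/-- A circuit of a matroid: a minimal dependent set. -/
def Matroid.IsCircuit' (M : Matroid α) (C : Set α) : Prop :=
  M.Dep C ∧ ∀ ⦃D⦄, D ⊂ C → M.Indep D

/-- Looplessness in the sense of the paper: no element is a loop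
(every singleton of the ground set is independent) and no element is a
coloop (no element lies in all bases). -/
def Matroid.PaperLoopless (M : Matroid α) : Prop :=
  ∀ e ∈ M.E, M.Indep {e} ∧ ∃ B, M.IsBase B ∧ e ∉ B

/-- The weight `x(B)` of a set of ground elements. -/
noncomputable def setWeight (x : α → ℝ) (B : Set α) : ℝ := ∑ᶠ e ∈ B, x e

/-- The min-max weight `μ_e(x)`: the minimum over circuits `C` containing `e`
of the maximum weight of an element of `C - e`. -/
noncomputable def muWeight (M : Matroid α) (x : α → ℝ) (e : α) : ℝ :=
  sInf {w | ∃ C, M.IsCircuit' C ∧ e ∈ C ∧ w = sSup (x '' (C \ {e}))}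

/-- The bottleneck weight `b_e(x) = min {x(e), μ_e(x)}`. -/
noncomputable def bottleneck (M : Matroid α) (x : α → ℝ) (e : α) : ℝ :=
  min (x e) (muWeight M x e)

/-- The minimum weight of a basis of `M`. -/
noncomputable def mwb (M : Matroid α) (x : α → ℝ) : ℝ :=
  sInf {w | ∃ B, M.IsBase B ∧ w = setWeight x B}

/-- `B` is an `x`-optimal basis of `M`. -/
def IsOptimalBase (M : Matroid α) (x : α → ℝ) (B : Set α) : Prop :=
  M.IsBase B ∧ ∀ B', M.IsBase B' → setWeight x B ≤ setWeight x B'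

/-- Deletion of a single element. -/
noncomputable def Matroid.del (M : Matroid α) (e : α) : Matroid α :=
  M ↾ (M.E \ {e})

/-- Contraction of a single element, defined by duality: `M/e = (M✶ \ e)✶`. -/
noncomputable def Matroid.con (M : Matroid α) (e : α) : Matroid α :=
  ((M✶ ↾ (M.E \ {e}))✶)

/-! ### Auxiliary lemmas -/

section Aux

variable {M : Matroid α} {x z : α → ℝ} {B C D : Set α} {e f : α}

/- ### `setWeight` lemmas -/

lemma setWeight_eq_sum (x : α → ℝ) (hB : B.Finite) :
    setWeight x B = ∑ a ∈ hB.toFinset, x a := by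
  rw [setWeight, ← finsum_mem_coe_finset, hB.coe_toFinset]

lemma setWeight_nonneg (hx : ∀ f, 0 ≤ x f) (hB : B.Finite) : 0 ≤ setWeight x B := by
  rw [setWeight_eq_sum x hB]
  exact Finset.sum_nonneg fun i _ => hx i

lemma setWeight_congr (h : ∀ a ∈ B, x a = z a) : setWeight x B = setWeight z B :=
  finsum_mem_congr rfl h

lemma setWeight_insert (ha : e ∉ B) (hB : B.Finite) :
    setWeight x (insert e B) = x e + setWeight x B := by
  classical
  rw [setWeight_eq_sum x (hB.insert e), setWeight_eq_sum x hB, Set.Finite.toFinset_insert,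
    Finset.sum_insert (by simpa using ha)]

lemma setWeight_diff_add (he : e ∈ B) (hB : B.Finite) :
    setWeight x B = x e + setWeight x (B \ {e}) := by
  have hBe : B = insert e (B \ {e}) := by
    rw [Set.insert_diff_singleton, Set.insert_eq_self.2 he]
  nth_rewrite 1 [hBe]
  exact setWeight_insert (fun h => h.2 rfl) (hB.diff)

lemma setWeight_update_of_not_mem [DecidableEq α] (heB : e ∉ B) :
    setWeight (Function.update z e 0) B = setWeight z B :=
  setWeight_congr fun a ha => Function.update_of_ne (fun h => heB (by rw [← h]; exact ha)) 0 z

lemma setWeight_update_of_mem [DecidableEq α] (heB : e ∈ B) (hB : B.Finite) :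
    setWeight (Function.update z e 0) B = setWeight z B - z e := by
  rw [setWeight_diff_add (x := Function.update z e 0) heB hB,
    setWeight_diff_add (x := z) heB hB, Function.update_self,
    setWeight_update_of_not_mem (fun h => h.2 rfl)]
  ring

/- ### `mwb` lemmas -/

lemma baseSet_finite (M : Matroid α) [M.Finite] : {B | M.IsBase B}.Finite :=
  M.ground_finite.finite_subsets.subset fun _ hB => hB.subset_ground

lemma mwbSet_eq (M : Matroid α) (x : α → ℝ) :
    {w | ∃ B, M.IsBase B ∧ w = setWeight x B} = setWeight x '' {B | M.IsBase B} := by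
  ext w
  simp [eq_comm]

lemma mwbSet_finite (M : Matroid α) [M.Finite] (x : α → ℝ) :
    {w | ∃ B, M.IsBase B ∧ w = setWeight x B}.Finite := by
  rw [mwbSet_eq]
  exact (baseSet_finite M).image _

lemma mwbSet_nonempty (M : Matroid α) (x : α → ℝ) :
    {w | ∃ B, M.IsBase B ∧ w = setWeight x B}.Nonempty := by
  obtain ⟨B, hB⟩ := M.exists_isBase
  exact ⟨setWeight x B, B, hB, rfl⟩

lemma mwb_le_base [M.Finite] (hB : M.IsBase B) (x : α → ℝ) : mwb M x ≤ setWeight x B :=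
  csInf_le (mwbSet_finite M x).bddBelow ⟨B, hB, rfl⟩

lemma exists_mwb_base (M : Matroid α) [M.Finite] (x : α → ℝ) :
    ∃ B, M.IsBase B ∧ mwb M x = setWeight x B :=
  (mwbSet_nonempty M x).csInf_mem (mwbSet_finite M x)

lemma le_mwb (M : Matroid α) [M.Finite] (x : α → ℝ) {c : ℝ}
    (h : ∀ B, M.IsBase B → c ≤ setWeight x B) : c ≤ mwb M x := by
  refine le_csInf (mwbSet_nonempty M x) ?_
  rintro w ⟨B, hB, rfl⟩
  exact h B hB

/- ### Circuit lemmas -/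

lemma exists_isCircuit_subset [M.Finite] (hD : M.Dep D) : ∃ C ⊆ D, M.IsCircuit' C := by
  suffices aux : ∀ n (D : Set α), M.Dep D → D.ncard ≤ n → ∃ C ⊆ D, M.IsCircuit' C from
    aux D.ncard D hD le_rfl
  intro n
  induction n with
  | zero =>
    intro D hD hcard
    have hfin : D.Finite := M.set_finite D hD.subset_ground
    rw [Nat.le_zero, Set.ncard_eq_zero hfin] at hcard
    exact absurd (hcard ▸ M.empty_indep) hD.not_indep
  | succ n ih =>
    intro D hD hcard
    by_cases h : ∀ ⦃D'⦄, D' ⊂ D → M.Indep D'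
    · exact ⟨D, subset_rfl, hD, h⟩
    · push_neg at h
      obtain ⟨D', hD'sub, hD'⟩ := h
      have hfin : D.Finite := M.set_finite D hD.subset_ground
      have hdep : M.Dep D' := ⟨hD', hD'sub.subset.trans hD.subset_ground⟩
      have hlt : D'.ncard < D.ncard := Set.ncard_lt_ncard hD'sub hfin
      obtain ⟨C, hCD', hC⟩ := ih D' hdep (by omega)
      exact ⟨C, hCD'.trans hD'sub.subset, hC⟩

lemma Matroid.IsCircuit'.diff_indep (hC : M.IsCircuit' C) (he : e ∈ C) : M.Indep (C \ {e}) :=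
  hC.2 (Set.sdiff_singleton_ssubset.2 he)

lemma Matroid.IsCircuit'.mem_closure (hC : M.IsCircuit' C) (he : e ∈ C) :
    e ∈ M.closure (C \ {e}) := by
  have hI : M.Indep (C \ {e}) := hC.diff_indep he
  have hdep : M.Dep (insert e (C \ {e})) := by
    rw [Set.insert_diff_singleton, Set.insert_eq_self.2 he]
    exact hC.1
  exact (hI.insert_dep_iff.1 hdep).1

lemma Matroid.IsCircuit'.diff_nonempty (hM : M.PaperLoopless) (hC : M.IsCircuit' C) (he : e ∈ C) :
    (C \ {e}).Nonempty := by
  rw [Set.nonempty_iff_ne_empty]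
  intro h
  have hCe : C = {e} := by
    apply Set.eq_of_subset_of_subset ?_ (Set.singleton_subset_iff.2 he)
    intro a ha
    by_contra hne
    exact (Set.eq_empty_iff_forall_notMem.1 h) a ⟨ha, hne⟩
  exact hC.1.not_indep (hCe ▸ (hM e (hC.1.subset_ground he)).1)

lemma exists_fund_circuit [M.Finite] (hB : M.IsBase B) (he : e ∈ M.E) (heB : e ∉ B) :
    ∃ C, M.IsCircuit' C ∧ e ∈ C ∧ C ⊆ insert e B := by
  have hdep : M.Dep (insert e B) := hB.insert_dep ⟨he, heB⟩
  obtain ⟨C, hCsub, hC⟩ := exists_isCircuit_subset hdep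
  refine ⟨C, hC, ?_, hCsub⟩
  by_contra heC
  have hCB : C ⊆ B := fun a ha => ((hCsub ha).resolve_left (fun h => heC (h ▸ ha)))
  exact hC.1.not_indep (hB.indep.subset hCB)

/- ### `muWeight` lemmas -/

lemma muSet_eq (M : Matroid α) (x : α → ℝ) (e : α) :
    {w | ∃ C, M.IsCircuit' C ∧ e ∈ C ∧ w = sSup (x '' (C \ {e}))} =
      (fun C => sSup (x '' (C \ {e}))) '' {C | M.IsCircuit' C ∧ e ∈ C} := by
  ext w
  simp only [Set.mem_image, Set.mem_setOf_eq, eq_comm, and_assoc]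

lemma circuitSet_finite (M : Matroid α) [M.Finite] : {C | M.IsCircuit' C}.Finite :=
  M.ground_finite.finite_subsets.subset fun _ hC => hC.1.subset_ground

lemma muSet_finite (M : Matroid α) [M.Finite] (x : α → ℝ) (e : α) :
    {w | ∃ C, M.IsCircuit' C ∧ e ∈ C ∧ w = sSup (x '' (C \ {e}))}.Finite := by
  rw [muSet_eq]
  exact ((circuitSet_finite M).subset (fun C hC => hC.1)).image _

lemma muWeight_le [M.Finite] (x : α → ℝ) (hC : M.IsCircuit' C) (he : e ∈ C) :
    muWeight M x e ≤ sSup (x '' (C \ {e})) :=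
  csInf_le (muSet_finite M x e).bddBelow ⟨C, hC, he, rfl⟩

lemma exists_muWeight_circuit [M.Finite] (x : α → ℝ) {C₀ : Set α}
    (hC₀ : M.IsCircuit' C₀) (he : e ∈ C₀) :
    ∃ C, M.IsCircuit' C ∧ e ∈ C ∧ muWeight M x e = sSup (x '' (C \ {e})) := by
  have hne : {w | ∃ C, M.IsCircuit' C ∧ e ∈ C ∧ w = sSup (x '' (C \ {e}))}.Nonempty :=
    ⟨_, C₀, hC₀, he, rfl⟩
  exact hne.csInf_mem (muSet_finite M x e)

lemma le_sSup_image [M.Finite] (x : α → ℝ) (hC : C ⊆ M.E) (hf : f ∈ C \ {e}) :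
    x f ≤ sSup (x '' (C \ {e})) := by
  have hfin : (C \ {e}).Finite := (M.set_finite C hC).diff
  exact le_csSup (hfin.image x).bddAbove ⟨f, hf, rfl⟩

/- ### Exchange lemmas -/

lemma exchange_in (hB : M.IsBase B) (heB : e ∈ B) (hC : M.IsCircuit' C) (heC : e ∈ C) :
    ∃ f ∈ C \ {e}, f ∉ B ∧ M.IsBase (insert f (B \ {e})) := by
  have hIndep : M.Indep (B \ {e}) := hB.indep.subset diff_subset
  have hex : ∃ f ∈ C \ {e}, f ∉ M.closure (B \ {e}) := by
    by_contra h
    push_neg at h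
    have h2 : C \ {e} ⊆ M.closure (B \ {e}) := fun a ha => h a ha
    have h3 : e ∈ M.closure (B \ {e}) :=
      (M.closure_subset_closure_of_subset_closure h2) (hC.mem_closure heC)
    exact hB.indep.notMem_closure_diff_of_mem heB h3
  obtain ⟨f, hf, hfcl⟩ := hex
  have hfBe : f ∉ B \ {e} := fun h' => hfcl (M.subset_closure _ hIndep.subset_ground h')
  have hfB : f ∉ B := fun h' => hfBe ⟨h', hf.2⟩
  have hfE : f ∈ M.E := hC.1.subset_ground hf.1
  have hind : M.Indep (insert f (B \ {e})) :=
    (hIndep.insert_indep_iff_of_notMem hfBe).2 ⟨hfE, hfcl⟩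
  exact ⟨f, hf, hfB, hB.exchange_isBase_of_indep hfB hind⟩

lemma exchange_out (hB : M.IsBase B) (he : e ∈ M.E) (heB : e ∉ B)
    (hC : M.IsCircuit' C) (heC : e ∈ C) (hCB : C ⊆ insert e B) (hf : f ∈ C \ {e}) :
    f ∈ B ∧ M.IsBase (insert e (B \ {f})) := by
  have hfB : f ∈ B := (hCB hf.1).resolve_left hf.2
  have hIndep : M.Indep (B \ {f}) := hB.indep.subset diff_subset
  have hnotcl : e ∉ M.closure (B \ {f}) := by
    intro hecl
    have h1 : f ∈ M.closure (C \ {f}) := hC.mem_closure hf.1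
    have h2 : C \ {f} ⊆ M.closure (B \ {f}) := by
      rintro g ⟨hgC, hgf⟩
      rcases hCB hgC with rfl | hgB
      · exact hecl
      · exact M.subset_closure _ hIndep.subset_ground ⟨hgB, hgf⟩
    exact hB.indep.notMem_closure_diff_of_mem hfB
      ((M.closure_subset_closure_of_subset_closure h2) h1)
  have heBf : e ∉ B \ {f} := fun h' => heB h'.1
  have hind : M.Indep (insert e (B \ {f})) :=
    (hIndep.insert_indep_iff_of_notMem heBf).2 ⟨he, hnotcl⟩
  exact ⟨hfB, hB.exchange_isBase_of_indep heB hind⟩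

/- ### The key step lemma -/

lemma key_step [DecidableEq α] (M : Matroid α) [M.Finite] (hM : M.PaperLoopless)
    (z : α → ℝ) (hz : ∀ f, 0 ≤ z f) (e : α) (he : e ∈ M.E) :
    mwb M z = bottleneck M z e + mwb M (Function.update z e 0) := by
  classical
  set z' := Function.update z e 0 with hz'def
  have hz'0 : ∀ f, 0 ≤ z' f := by
    intro f
    rcases eq_or_ne f e with rfl | h
    · simp [hz'def]
    · simp [hz'def, Function.update_of_ne h, hz f]
  obtain ⟨he1, Bc, hBc, heBc⟩ := hM e he
  obtain ⟨C₀, hC₀, heC₀, _⟩ := exists_fund_circuit hBc he heBc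
  obtain ⟨Cμ, hCμ, heCμ, hCμ_eq⟩ := exists_muWeight_circuit z hC₀ heC₀
  -- μ ≥ 0
  have hmu_nonneg : 0 ≤ muWeight M z e := by
    obtain ⟨g, hg⟩ := hCμ.diff_nonempty hM heCμ
    rw [hCμ_eq]
    exact le_trans (hz g) (le_sSup_image z hCμ.1.subset_ground hg)
  apply le_antisymm
  · -- upper bound
    obtain ⟨B1, hB1, hw1⟩ := exists_mwb_base M z'
    have hB1fin : B1.Finite := M.set_finite B1 hB1.subset_ground
    rcases em (e ∈ B1) with heB1 | heB1
    · have hsw : setWeight z' B1 = setWeight z B1 - z e :=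
        setWeight_update_of_mem heB1 hB1fin
      have h1 : mwb M z ≤ z e + mwb M z' := by
        have := mwb_le_base hB1 z
        rw [hw1, hsw]; linarith
      have h2 : mwb M z ≤ muWeight M z e + mwb M z' := by
        obtain ⟨f, hf, hfB1, hBnew⟩ := exchange_in hB1 heB1 hCμ heCμ
        have hzf : z f ≤ muWeight M z e := by
          rw [hCμ_eq]
          exact le_sSup_image z hCμ.1.subset_ground hf
        have hfBe : f ∉ B1 \ {e} := fun h' => hfB1 h'.1
        have hcalc : setWeight z (insert f (B1 \ {e})) = z f + (setWeight z B1 - z e) := by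
          rw [setWeight_insert hfBe (hB1fin.diff)]
          rw [setWeight_diff_add (x := z) heB1 hB1fin]
          ring
        have := mwb_le_base hBnew z
        rw [hcalc] at this
        rw [hw1, hsw]
        linarith
      rw [bottleneck, ← min_add_add_right]
      exact le_min h1 h2
    · have hsw : setWeight z' B1 = setWeight z B1 := setWeight_update_of_not_mem heB1
      have h0 : mwb M z ≤ mwb M z' := by
        have := mwb_le_base hB1 z
        rw [hw1, hsw]; linarith
      have hbn : 0 ≤ bottleneck M z e := le_min (hz e) hmu_nonneg
      linarith
  · -- lower bound
    apply le_mwb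
    intro B hB
    have hBfin : B.Finite := M.set_finite B hB.subset_ground
    rcases em (e ∈ B) with heB | heB
    · have h1 : mwb M z' ≤ setWeight z B - z e := by
        have := mwb_le_base hB z'
        rwa [setWeight_update_of_mem heB hBfin] at this
      have h2 : bottleneck M z e ≤ z e := min_le_left _ _
      linarith
    · obtain ⟨C, hC, heC, hCsub⟩ := exists_fund_circuit hB he heB
      have hne : (C \ {e}).Nonempty := hC.diff_nonempty hM heC
      have hCfin : C.Finite := M.set_finite C hC.1.subset_ground
      obtain ⟨f, hf, hfx⟩ : ∃ f ∈ C \ {e}, z f = sSup (z '' (C \ {e})) := by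
        have hmem : sSup (z '' (C \ {e})) ∈ z '' (C \ {e}) :=
          (hne.image z).csSup_mem ((hCfin.diff).image z)
        obtain ⟨f, hf, hfx⟩ := hmem
        exact ⟨f, hf, hfx⟩
      have hμf : muWeight M z e ≤ z f := by
        rw [hfx]
        exact muWeight_le z hC heC
      obtain ⟨hfB, hBnew⟩ := exchange_out hB he heB hC heC hCsub hf
      have hfne : f ≠ e := hf.2
      have heBf : e ∉ B \ {f} := fun h' => heB h'.1
      have hcalc : setWeight z' (insert e (B \ {f})) = setWeight z B - z f := by
        rw [setWeight_insert heBf (hBfin.diff)]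
        have h3 : setWeight z' (B \ {f}) = setWeight z (B \ {f}) :=
          setWeight_update_of_not_mem heBf
        have h4 : setWeight z B = z f + setWeight z (B \ {f}) :=
          setWeight_diff_add hfB hBfin
        have h5 : z' e = 0 := Function.update_self e 0 z
        rw [h3, h5, h4]
        ring
      have h1 : mwb M z' ≤ setWeight z B - z f := by
        have := mwb_le_base hBnew z'
        rwa [hcalc] at this
      have h2 : bottleneck M z e ≤ muWeight M z e := min_le_right _ _
      linarith

end Aux

open scoped Classical in
/-- computing the optimal value by successively zeroing the
weights of the elements of a fixed basis and summing bottleneck weights.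
Here `xs i` is the weighting obtained from `x` by zeroing `e 0, …, e (i-1)`,
so `xs 0 = x` and the summand for `i` is `b_{e i}(xs i)`. -/
theorem stmt14 (M : Matroid α) [M.Finite] (hM : M.PaperLoopless)
    (x : α → ℝ) (hx : ∀ f, 0 ≤ x f)
    {r : ℕ} (e : Fin r → α) (hinj : Function.Injective e)
    (hB : M.IsBase (Set.range e))
    (xs : ℕ → α → ℝ)
    (hxs : ∀ i a, xs i a = if ∃ j : Fin r, (j : ℕ) < i ∧ e j = a then 0 else x a) :
    mwb M x = ∑ i : Fin r, bottleneck M (xs i) (e i) := by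
  classical
  have hxs_nonneg : ∀ i a, 0 ≤ xs i a := by
    intro i a
    rw [hxs]
    split_ifs
    · exact le_refl 0
    · exact hx a
  have hxs0 : xs 0 = x := by
    funext a
    rw [hxs]
    simp
  set F : ℕ → ℝ := fun i => if h : i < r then bottleneck M (xs i) (e ⟨i, h⟩) else 0 with hF
  have hupdate : ∀ n (hn : n < r),
      xs (n + 1) = Function.update (xs n) (e ⟨n, hn⟩) 0 := by
    intro n hn
    funext a
    rw [Function.update_apply]
    rcases eq_or_ne a (e ⟨n, hn⟩) with rfl | hne
    · rw [if_pos rfl, hxs, if_pos ⟨⟨n, hn⟩, Nat.lt_succ_self n, rfl⟩]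
    · rw [if_neg hne, hxs, hxs]
      have hiff : (∃ j : Fin r, (j : ℕ) < n + 1 ∧ e j = a) ↔
          (∃ j : Fin r, (j : ℕ) < n ∧ e j = a) := by
        constructor
        · rintro ⟨j, hj, rfl⟩
          rcases Nat.lt_succ_iff_lt_or_eq.1 hj with h | h
          · exact ⟨j, h, rfl⟩
          · exact absurd (congrArg e (Fin.ext h : j = ⟨n, hn⟩)).symm (Ne.symm hne)
        · rintro ⟨j, hj, rfl⟩
          exact ⟨j, Nat.lt_succ_of_lt hj, rfl⟩
      simp only [hiff]
  have main : ∀ n, n ≤ r →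
      mwb M x = (∑ i ∈ Finset.range n, F i) + mwb M (xs n) := by
    intro n
    induction n with
    | zero => simp [hxs0]
    | succ n ih =>
      intro hn1
      have hn : n < r := hn1
      have heE : e ⟨n, hn⟩ ∈ M.E := hB.subset_ground ⟨⟨n, hn⟩, rfl⟩
      have hkey := key_step M hM (xs n) (hxs_nonneg n) (e ⟨n, hn⟩) heE
      rw [← hupdate n hn] at hkey
      rw [Finset.sum_range_succ]
      have hFn : F n = bottleneck M (xs n) (e ⟨n, hn⟩) := dif_pos hn
      rw [hFn]
      have := ih (le_of_lt hn)
      linarith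
  have hfinal := main r le_rfl
  have hzero : mwb M (xs r) = 0 := by
    have hBfin : (Set.range e).Finite := M.set_finite _ hB.subset_ground
    have hw0 : setWeight (xs r) (Set.range e) = 0 := by
      rw [setWeight_eq_sum _ hBfin]
      apply Finset.sum_eq_zero
      intro a ha
      rw [Set.Finite.mem_toFinset] at ha
      obtain ⟨j, rfl⟩ := ha
      rw [hxs, if_pos ⟨j, j.2, rfl⟩]
    have h1 : mwb M (xs r) ≤ 0 := by
      have := mwb_le_base hB (xs r)
      rwa [hw0] at this
    have h2 : 0 ≤ mwb M (xs r) := by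
      apply le_mwb
      intro B hBB
      exact setWeight_nonneg (hxs_nonneg r) (M.set_finite B hBB.subset_ground)
    linarith
  have hsum : ∑ i : Fin r, bottleneck M (xs i) (e i) = ∑ i ∈ Finset.range r, F i := by
    rw [← Fin.sum_univ_eq_sum_range F r]
    apply Finset.sum_congr rfl
    intro i _
    rw [hF]
    simp only [dif_pos i.2, Fin.eta]
  rw [hsum, hfinal, hzero]
  ring
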